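/- Let Ω ⊂ ℝ² be open, bounded and strictly convex with C¹ boundary, and let x₀ ∈ ℝ² \ cl(Ω). Then Γ(x₀) := { x ∈ ∂Ω : ⟨x − x₀, n(x)⟩ > 0 } is a connected subset of ∂Ω. -/

import Mathlib

open Real Set Metric
open scoped RealInnerProductSpace

noncomputable section IlluminatedRegion

abbrev E2 := EuclideanSpace ℝ (Fin 2)
abbrev Sph := Metric.sphere (0 : E2) 1

lemma inner2 (x y : E2) : ⟪x, y⟫ = x 0 * y 0 + x 1 * y 1 := by
  simp [PiLp.inner_apply, Fin.sum_univ_two, RCLike.inner_apply, mul_comm]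

def Jrot (v : E2) : E2 := WithLp.toLp 2 ![-(v 1), v 0]

def par (v : E2) (θ : ℝ) : E2 := Real.cos θ • v + Real.sin θ • Jrot v

lemma par_i (v : E2) (θ : ℝ) (i : Fin 2) :
    par v θ i = Real.cos θ * v i + Real.sin θ * Jrot v i := rfl

lemma Jrot0 (v : E2) : Jrot v 0 = -(v 1) := rfl
lemma Jrot1 (v : E2) : Jrot v 1 = v 0 := rfl


lemma sq_coords {v : E2} (hv : ‖v‖ = 1) : v 0 ^ 2 + v 1 ^ 2 = 1 := by
  have := real_inner_self_eq_norm_sq v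
  rw [hv, inner2] at this; nlinarith

lemma ext2 {x y : E2} (h0 : x 0 = y 0) (h1 : x 1 = y 1) : x = y := by
  ext i; fin_cases i <;> assumption

lemma expand {v : E2} (hv : ‖v‖ = 1) (x : E2) :
    x = ⟪x, v⟫ • v + ⟪x, Jrot v⟫ • Jrot v := by
  have h := sq_coords hv
  apply ext2
  · simp only [PiLp.add_apply, PiLp.smul_apply, smul_eq_mul, inner2, Jrot0, Jrot1]
    linear_combination x 0 * h.symm
  · simp only [PiLp.add_apply, PiLp.smul_apply, smul_eq_mul, inner2, Jrot0, Jrot1]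
    linear_combination x 1 * h.symm

lemma coords_on_circle {v : E2} (hv : ‖v‖ = 1) {x : E2} (hx : ‖x‖ = 1) :
    ⟪x, v⟫ ^ 2 + ⟪x, Jrot v⟫ ^ 2 = 1 := by
  have h := sq_coords hv
  have hx' := sq_coords hx
  simp only [inner2, Jrot0, Jrot1]
  nlinarith

lemma norm_eq_one_of_inner (x : E2) (h : ⟪x, x⟫ = 1) : ‖x‖ = 1 := by
  have h2 : ‖x‖ ^ 2 = 1 := by rw [← real_inner_self_eq_norm_sq]; exact h
  nlinarith [norm_nonneg x]

lemma par_mem_sphere {v : E2} (hv : ‖v‖ = 1) (θ : ℝ) :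
    par v θ ∈ Metric.sphere (0 : E2) 1 := by
  have hvv : v 0 ^ 2 + v 1 ^ 2 = 1 := by
    have := real_inner_self_eq_norm_sq v
    rw [hv] at this
    rw [inner2] at this; nlinarith
  rw [mem_sphere_zero_iff_norm]
  apply norm_eq_one_of_inner
  rw [inner2]
  simp only [par_i, Jrot0, Jrot1]
  nlinarith [Real.sin_sq_add_cos_sq θ]

lemma exists_angle {v : E2} (hv : ‖v‖ = 1) {x : E2} (hx : ‖x‖ = 1) :
    ∃ θ ∈ Ioc (-π) π, x = par v θ ∧ (x ≠ -v → θ ∈ Ioo (-π) π) := by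
  set α := ⟪x, v⟫ with hα
  set β := ⟪x, Jrot v⟫ with hβ
  have hcirc : α ^ 2 + β ^ 2 = 1 := coords_on_circle hv hx
  set z : ℂ := ⟨α, β⟩ with hz
  have hzabs : ‖z‖ = 1 := by
    rw [hz, Complex.norm_def, Complex.normSq_mk,
      show α * α + β * β = 1 by nlinarith, Real.sqrt_one]
  have hz0 : z ≠ 0 := by
    intro h; rw [h] at hzabs; simp at hzabs
  refine ⟨Complex.arg z, Complex.arg_mem_Ioc z, ?_, ?_⟩
  · have hcos : Real.cos (Complex.arg z) = α := by
      rw [Complex.cos_arg hz0, hzabs]; simp [hz]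
    have hsin : Real.sin (Complex.arg z) = β := by
      rw [Complex.sin_arg, hzabs]; simp [hz]
    rw [par, hcos, hsin]
    exact expand hv x
  · intro hxv
    rcases Complex.arg_mem_Ioc z with ⟨h1, h2⟩
    rcases lt_or_eq_of_le h2 with h2 | h2
    · exact ⟨h1, h2⟩
    · exfalso
      have hcos : Real.cos (Complex.arg z) = α := by
        rw [Complex.cos_arg hz0, hzabs]; simp [hz]
      have hsin : Real.sin (Complex.arg z) = β := by
        rw [Complex.sin_arg, hzabs]; simp [hz]
      rw [h2] at hcos hsin
      simp at hcos hsin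
      apply hxv
      have := expand hv x
      rw [← hα, ← hβ, ← hcos, ← hsin] at this
      simpa using this

lemma inner_Jrot_self (v : E2) : ⟪Jrot v, v⟫ = 0 := by
  rw [inner2]; show -(v 1) * v 0 + v 0 * v 1 = 0; ring

lemma cos_ne_neg_one {θ : ℝ} (hθ : θ ∈ Ioo (-π) π) : Real.cos θ ≠ -1 := by
  intro h
  have h2 : Real.cos (θ / 2) = 0 := by
    rw [Real.cos_half (le_of_lt hθ.1) (le_of_lt hθ.2), h]
    norm_num
  have h3 : Real.cos (θ / 2) > 0 := by
    apply Real.cos_pos_of_mem_Ioo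
    constructor <;> [linarith [hθ.1]; linarith [hθ.2]]
  linarith

lemma par_ne {v : E2} (hv : ‖v‖ = 1) (θ : ℝ) (hθ : θ ∈ Ioo (-π) π) : par v θ ≠ -v := by
  intro h
  have hc : ⟪par v θ, v⟫ = Real.cos θ := by
    rw [par, inner_add_left, real_inner_smul_left, real_inner_smul_left,
      real_inner_self_eq_norm_sq, hv, inner_Jrot_self]
    ring
  rw [h] at hc
  have : ⟪-v, v⟫ = (-1 : ℝ) := by
    rw [inner_neg_left, real_inner_self_eq_norm_sq, hv]; norm_num
  exact cos_ne_neg_one hθ (by rw [this] at hc; linarith)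

lemma continuous_par (v : E2) : Continuous (par v) := by
  unfold par
  exact (Real.continuous_cos.smul continuous_const).add
    (Real.continuous_sin.smul continuous_const)

lemma sphere_diff_connected {v : E2} (hv : ‖v‖ = 1) :
    IsConnected (Metric.sphere (0 : E2) 1 \ {-v}) := by
  have himg : Metric.sphere (0 : E2) 1 \ {-v} = par v '' Ioo (-π) π := by
    apply Subset.antisymm
    · rintro x ⟨hx, hxv⟩
      rw [mem_sphere_zero_iff_norm] at hx
      obtain ⟨θ, _, hpar, hmem⟩ := exists_angle hv hx
      exact ⟨θ, hmem (by simpa using hxv), hpar.symm⟩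
    · rintro x ⟨θ, hθ, rfl⟩
      exact ⟨par_mem_sphere hv θ, by simpa using par_ne hv θ hθ⟩
  rw [himg]
  apply IsConnected.image
  · exact ⟨⟨0, by constructor <;> simp [Real.pi_pos]⟩, isPreconnected_Ioo⟩
  · exact (continuous_par v).continuousOn

lemma par_combo (v : E2) {a b : ℝ} (t : ℝ) :
    Real.sin (b - a) • par v t
      = Real.sin (b - t) • par v a + Real.sin (t - a) • par v b := by
  have hc : ∀ s : ℝ, Real.sin (b - a) * Real.cos t
      = Real.sin (b - t) * Real.cos a + Real.sin (t - a) * Real.cos b ∨ True := fun _ => Or.inr trivial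
  have h1 : Real.sin (b - a) * Real.cos t
      = Real.sin (b - t) * Real.cos a + Real.sin (t - a) * Real.cos b := by
    rw [Real.sin_sub, Real.sin_sub, Real.sin_sub]; ring
  have h2 : Real.sin (b - a) * Real.sin t
      = Real.sin (b - t) * Real.sin a + Real.sin (t - a) * Real.sin b := by
    rw [Real.sin_sub, Real.sin_sub, Real.sin_sub]; ring
  unfold par
  rw [smul_add, smul_add, smul_add, smul_smul, smul_smul, smul_smul, smul_smul,
    smul_smul, smul_smul, h1, h2]
  module

lemma par_pi (v : E2) : par v π = -v := by
  unfold par; simp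

lemma par_neg_pi (v : E2) : par v (-π) = -v := by
  unfold par; simp

lemma par_zero (v : E2) : par v 0 = v := by
  unfold par; simp

lemma arc_connected (K : Set E2) (hKne : K.Nonempty) (x₀ e : E2) (he : ‖e‖ = 1)
    (hsep : ∀ y ∈ K, 0 < ⟪y - x₀, e⟫) :
    IsConnected (Metric.sphere (0 : E2) 1 ∩ {u | ∃ y ∈ K, 0 < ⟪y - x₀, u⟫}) := by
  set C : Set E2 := {u | ∀ y ∈ K, ⟪y - x₀, u⟫ ≤ 0} with hC
  -- the key convexity-of-cone claim
  have claim : ∀ a b : ℝ, par e a ∈ C → par e b ∈ C → a < b → b - a < π →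
      ∀ t, a ≤ t → t ≤ b → par e t ∈ C := by
    intro a b ha hb hab hlen t hta htb
    intro y hy
    have hcombo := par_combo e (a := a) (b := b) t
    have hinner : Real.sin (b - a) * ⟪y - x₀, par e t⟫
        = Real.sin (b - t) * ⟪y - x₀, par e a⟫ + Real.sin (t - a) * ⟪y - x₀, par e b⟫ := by
      rw [← real_inner_smul_right, ← real_inner_smul_right, ← real_inner_smul_right,
        hcombo, inner_add_right]
    have s1 : 0 < Real.sin (b - a) := Real.sin_pos_of_pos_of_lt_pi (by linarith) (by linarith)
    have s2 : 0 ≤ Real.sin (b - t) := Real.sin_nonneg_of_nonneg_of_le_pi (by linarith) (by linarith)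
    have s3 : 0 ≤ Real.sin (t - a) := Real.sin_nonneg_of_nonneg_of_le_pi (by linarith) (by linarith)
    nlinarith [ha y hy, hb y hy, mul_nonneg s2 (neg_nonneg.2 (ha y hy)),
      mul_nonneg s3 (neg_nonneg.2 (hb y hy))]
  obtain ⟨y₀, hy₀⟩ := hKne
  have hpi : Real.pi > 0 := Real.pi_pos
  have hnotC : ∀ t : ℝ, par e t ∉ C → par e t ∈ {u | ∃ y ∈ K, 0 < ⟪y - x₀, u⟫} := by
    intro t ht
    simp only [hC, mem_setOf_eq, not_forall, not_le, exists_prop] at ht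
    obtain ⟨y, hy, hlt⟩ := ht
    exact ⟨y, hy, hlt⟩
  have hCpi : par e π ∈ C := by
    rw [par_pi]
    intro y hy
    rw [inner_neg_right]
    linarith [hsep y hy]
  have hCnegpi : par e (-π) ∈ C := by
    rw [par_neg_pi]
    intro y hy
    rw [inner_neg_right]
    linarith [hsep y hy]
  have h0 : par e 0 ∉ C := by
    rw [par_zero]
    intro h
    linarith [h y₀ hy₀, hsep y₀ hy₀]
  set A' : Set ℝ := {θ | θ ∈ Ioo (-π) π ∧ par e θ ∉ C} with hA'
  have hA'oc : OrdConnected A' := by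
    constructor
    rintro θ₁ ⟨hθ₁m, hθ₁⟩ θ₂ ⟨hθ₂m, hθ₂⟩ t ⟨ht1, ht2⟩
    refine ⟨⟨lt_of_lt_of_le hθ₁m.1 ht1, lt_of_le_of_lt ht2 hθ₂m.2⟩, ?_⟩
    intro htC
    rcases lt_trichotomy t 0 with h | h | h
    · exact hθ₁ (claim (-π) t hCnegpi htC (by linarith [hθ₁m.1]) (by linarith)
        θ₁ (le_of_lt hθ₁m.1) ht1)
    · rw [h] at htC; exact h0 htC
    · exact hθ₂ (claim t π htC hCpi (by linarith [hθ₂m.2]) (by linarith)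
        θ₂ ht2 (le_of_lt hθ₂m.2))
  have himg : Metric.sphere (0 : E2) 1 ∩ {u | ∃ y ∈ K, 0 < ⟪y - x₀, u⟫} = par e '' A' := by
    apply Subset.antisymm
    · rintro u ⟨hu, hua⟩
      rw [mem_sphere_zero_iff_norm] at hu
      obtain ⟨θ, hθmem, hpar, hne⟩ := exists_angle he hu
      have hune : u ≠ -e := by
        rintro rfl
        obtain ⟨y, hy, hlt⟩ := hua
        rw [inner_neg_right] at hlt
        linarith [hsep y hy]
      refine ⟨θ, ⟨hne hune, ?_⟩, hpar.symm⟩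
      rw [← hpar]
      intro hc
      obtain ⟨y, hy, hlt⟩ := hua
      linarith [hc y hy]
    · rintro u ⟨θ, ⟨hθm, hθC⟩, rfl⟩
      exact ⟨par_mem_sphere he θ, hnotC θ hθC⟩
  rw [himg]
  apply IsConnected.image
  · refine ⟨⟨0, ⟨⟨by linarith, by linarith⟩, h0⟩⟩, hA'oc.isPreconnected⟩
  · exact (continuous_par e).continuousOn

def Zmap (v x : E2) : ℂ := ⟨⟪x, v⟫, ⟪x, Jrot v⟫⟩

lemma Zmap_abs {v : E2} (hv : ‖v‖ = 1) {x : E2} (hx : ‖x‖ = 1) :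
    ‖Zmap v x‖ = 1 := by
  rw [Zmap, Complex.norm_def, Complex.normSq_mk,
    show ⟪x, v⟫ * ⟪x, v⟫ + ⟪x, Jrot v⟫ * ⟪x, Jrot v⟫ = 1 by
      have := coords_on_circle hv hx; nlinarith, Real.sqrt_one]

lemma Zmap_ne_neg_one {v : E2} (hv : ‖v‖ = 1) {x : E2} (hx : ‖x‖ = 1) (hxv : x ≠ -v) :
    Zmap v x ∈ Complex.slitPlane := by
  rcases eq_or_ne (⟪x, Jrot v⟫) 0 with h | h
  · left
    have hc := coords_on_circle hv hx
    rw [h] at hc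
    have hα : ⟪x, v⟫ = 1 ∨ ⟪x, v⟫ = -1 := by
      have h2 : (⟪x, v⟫ - 1) * (⟪x, v⟫ + 1) = 0 := by nlinarith
      rcases mul_eq_zero.1 h2 with h' | h'
      · left; linarith
      · right; linarith
    rcases hα with h' | h'
    · show (0 : ℝ) < (Zmap v x).re
      show (0:ℝ) < ⟪x, v⟫
      rw [h']; norm_num
    · exfalso
      apply hxv
      have hx2 := expand hv x
      rw [h', h] at hx2
      simpa using hx2
  · right
    exact h

lemma Zmap_injOn {v : E2} (hv : ‖v‖ = 1) {x y : E2} (hx : ‖x‖ = 1) (hy : ‖y‖ = 1)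
    (h : Complex.arg (Zmap v x) = Complex.arg (Zmap v y)) : x = y := by
  have hax := Zmap_abs hv hx
  have hay := Zmap_abs hv hy
  have h0x : Zmap v x ≠ 0 := by intro hc; rw [hc] at hax; simp at hax
  have h0y : Zmap v y ≠ 0 := by intro hc; rw [hc] at hay; simp at hay
  have hcx : Real.cos (Complex.arg (Zmap v x)) = ⟪x, v⟫ := by
    rw [Complex.cos_arg h0x, hax]; simp [Zmap]
  have hcy : Real.cos (Complex.arg (Zmap v y)) = ⟪y, v⟫ := by
    rw [Complex.cos_arg h0y, hay]; simp [Zmap]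
  have hsx : Real.sin (Complex.arg (Zmap v x)) = ⟪x, Jrot v⟫ := by
    rw [Complex.sin_arg, hax]; simp [Zmap]
  have hsy : Real.sin (Complex.arg (Zmap v y)) = ⟪y, Jrot v⟫ := by
    rw [Complex.sin_arg, hay]; simp [Zmap]
  rw [expand hv x, expand hv y, ← hcx, ← hcy, ← hsx, ← hsy, h]

lemma rank_E2 : 1 < Module.rank ℝ E2 := by
  rw [← Module.finrank_eq_rank]
  norm_cast
  simp [finrank_euclideanSpace_fin]

lemma continuous_Zmap (v : E2) : Continuous (Zmap v) := by
  have : Zmap v = fun x => (⟪x, v⟫ : ℝ) + (⟪x, Jrot v⟫ : ℝ) * Complex.I := by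
    funext x
    unfold Zmap
    exact Complex.mk_eq_add_mul_I _ _
  rw [this]
  apply Continuous.add
  · exact Complex.continuous_ofReal.comp (continuous_id.inner continuous_const)
  · exact (Complex.continuous_ofReal.comp (continuous_id.inner continuous_const)).mul
      continuous_const

lemma sph_norm (x : ↥Sph) : ‖(x : E2)‖ = 1 := mem_sphere_zero_iff_norm.1 x.2

lemma circle_map_surjective (f : ↥Sph → ↥Sph) (hf : Continuous f)
    (hinj : Function.Injective f) : Function.Surjective f := by
  by_contra hsurj
  rw [Function.Surjective] at hsurj
  push_neg at hsurj
  obtain ⟨q, hq⟩ := hsurj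
  set v : E2 := -(q : E2) with hvdef
  have hv : ‖v‖ = 1 := by rw [hvdef, norm_neg]; exact sph_norm q
  have hfne : ∀ x : ↥Sph, ((f x : E2)) ≠ -v := by
    intro x hc
    exact hq x (Subtype.ext (by rw [hc, hvdef, neg_neg]))
  set g : ↥Sph → ℝ := fun x => Complex.arg (Zmap v (f x)) with hgdef
  have hgc : Continuous g := by
    rw [continuous_iff_continuousAt]
    intro x
    have h1 : ContinuousAt (fun y : ↥Sph => Zmap v ((f y : E2))) x :=
      ((continuous_Zmap v).comp (continuous_subtype_val.comp hf)).continuousAt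
    exact ContinuousAt.comp (x := x) (g := Complex.arg)
      (f := fun y : ↥Sph => Zmap v ((f y : E2)))
      (Complex.continuousAt_arg (Zmap_ne_neg_one hv (sph_norm (f x)) (hfne x))) h1
  have hginj : Function.Injective g := by
    intro x y hxy
    exact hinj (Subtype.ext (Zmap_injOn hv (sph_norm (f x)) (sph_norm (f y)) hxy))
  have hconn : ConnectedSpace ↥Sph := by
    rw [← isConnected_iff_connectedSpace]
    exact isConnected_sphere rank_E2 0 zero_le_one
  have hcomp : CompactSpace ↥Sph := isCompact_iff_compactSpace.1 (isCompact_sphere 0 1)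
  have hninst : Nonempty ↥Sph := ⟨⟨v, mem_sphere_zero_iff_norm.2 hv⟩⟩
  obtain ⟨xM, -, hxM⟩ := isCompact_univ.exists_isMaxOn univ_nonempty hgc.continuousOn
  obtain ⟨xm, -, hxm⟩ := isCompact_univ.exists_isMinOn univ_nonempty hgc.continuousOn
  set a := g xm with hadef
  set b := g xM with hbdef
  have hle : ∀ x, a ≤ g x := fun x => hxm (mem_univ x)
  have hge : ∀ x, g x ≤ b := fun x => hxM (mem_univ x)
  have hab : a < b := by
    rcases lt_or_ge a b with h | h
    · exact h
    · exfalso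
      have hcon : ∀ x y : ↥Sph, g x = g y := by
        intro x y
        have := hle x; have := hge x; have := hle y; have := hge y
        linarith
      have h2 : (⟨v, mem_sphere_zero_iff_norm.2 hv⟩ : ↥Sph)
          = ⟨-v, mem_sphere_zero_iff_norm.2 (by rw [norm_neg]; exact hv)⟩ :=
        hginj (hcon _ _)
      have h3 : v = -v := congrArg Subtype.val h2
      have h4 : v + v = 0 := add_eq_zero_iff_eq_neg.mpr h3
      have h5 : (2 : ℝ) • v = 0 := by rw [two_smul]; exact h4
      have h6 : v = 0 := by
        rcases smul_eq_zero.mp h5 with h | h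
        · norm_num at h
        · exact h
      rw [h6] at hv
      simp at hv
  set m := (a + b) / 2 with hmdef
  obtain ⟨xmid, hxmid⟩ := intermediate_value_univ xm xM hgc (show m ∈ Icc (g xm) (g xM) from ⟨by linarith, by linarith⟩)
  have hxmne : xm ≠ xmid := fun h => by rw [h, hxmid] at hadef; simp [hmdef] at hadef; linarith
  have hxMne : xM ≠ xmid := fun h => by rw [h, hxmid] at hbdef; simp [hmdef] at hbdef; linarith
  have hcompl : IsConnected ({xmid}ᶜ : Set ↥Sph) := by
    have hmidv : ‖-(xmid : E2)‖ = 1 := by rw [norm_neg]; exact sph_norm xmid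
    have h1 : IsConnected (Sph \ {(xmid : E2)}) := by
      have := sphere_diff_connected (v := -(xmid : E2)) hmidv
      rwa [neg_neg] at this
    have himage : (Subtype.val '' ({xmid}ᶜ : Set ↥Sph)) = Sph \ {(xmid : E2)} := by
      ext u
      constructor
      · rintro ⟨x, hx, rfl⟩
        exact ⟨x.2, fun hc => hx (Subtype.ext (by simpa using hc))⟩
      · rintro ⟨hu, hune⟩
        exact ⟨⟨u, hu⟩, fun hc => hune (by simpa using congrArg Subtype.val hc), rfl⟩
    refine ⟨?_, ?_⟩
    · obtain ⟨u, hu⟩ := h1.nonempty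
      rw [← himage] at hu
      obtain ⟨x, hx, -⟩ := hu
      exact ⟨x, hx⟩
    · apply (Topology.IsInducing.subtypeVal).isPreconnected_image.mp
      rw [himage]
      exact h1.isPreconnected
  have himg2 : IsPreconnected (g '' ({xmid}ᶜ : Set ↥Sph)) :=
    hcompl.isPreconnected.image g hgc.continuousOn
  have hma : a ∈ g '' ({xmid}ᶜ : Set ↥Sph) := ⟨xm, hxmne, rfl⟩
  have hmb : b ∈ g '' ({xmid}ᶜ : Set ↥Sph) := ⟨xM, hxMne, rfl⟩
  have hmm : m ∈ g '' ({xmid}ᶜ : Set ↥Sph) :=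
    himg2.Icc_subset hma hmb ⟨by linarith, by linarith⟩
  obtain ⟨y, hy, hym⟩ := hmm
  exact hy (hginj (by rw [hym, hxmid]))

lemma ray_hits_frontier {K : Set E2} (hK : IsCompact K) {c : E2} (hc : c ∈ interior K)
    {u : E2} (hu : ‖u‖ = 1) :
    ∃ T : ℝ, 0 < T ∧ c + T • u ∈ frontier K := by
  set S : Set ℝ := {t : ℝ | 0 ≤ t ∧ c + t • u ∈ K} with hS
  have hcK : c ∈ K := interior_subset hc
  have hSne : S.Nonempty := ⟨0, le_refl 0, by simpa using hcK⟩
  obtain ⟨R, hR⟩ := hK.isBounded.subset_closedBall c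
  have hSbdd : BddAbove S := by
    refine ⟨R, fun t ht => ?_⟩
    have := hR ht.2
    rw [mem_closedBall, dist_eq_norm] at this
    simpa [norm_smul, hu, abs_of_nonneg ht.1] using this
  have hSclosed : IsClosed S :=
    (isClosed_le continuous_const continuous_id).inter
      (hK.isClosed.preimage (by continuity))
  have hScomp : IsCompact S :=
    Metric.isCompact_of_isClosed_isBounded hSclosed
      ((Metric.isBounded_Icc 0 R).subset (fun t ht => by
        have h2 := hR ht.2
        rw [mem_closedBall, dist_eq_norm] at h2
        simp only [mem_Icc]
        constructor
        · exact ht.1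
        · simpa [norm_smul, hu, abs_of_nonneg ht.1] using h2))
  have hT : sSup S ∈ S := hScomp.sSup_mem hSne
  set T := sSup S with hTdef
  have hxK : c + T • u ∈ K := hT.2
  have hxni : c + T • u ∉ interior K := by
    intro hint
    obtain ⟨ε, hε, hball⟩ := Metric.isOpen_iff.1 isOpen_interior _ hint
    have hmem : c + (T + ε / 2) • u ∈ K := by
      apply interior_subset
      apply hball
      rw [mem_ball, dist_eq_norm]
      have : c + (T + ε / 2) • u - (c + T • u) = (ε / 2) • u := by module
      rw [this, norm_smul, hu, mul_one, Real.norm_eq_abs, abs_of_pos (by linarith : (0:ℝ) < ε / 2)]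
      linarith
    have : T + ε / 2 ∈ S := ⟨by linarith [hT.1], hmem⟩
    have := le_csSup hSbdd this
    linarith
  have hTpos : 0 < T := by
    rcases lt_or_eq_of_le hT.1 with h | h
    · exact h
    · exfalso
      apply hxni
      rw [← h]
      simpa using hc
  refine ⟨T, hTpos, ?_, hxni⟩
  rw [hK.isClosed.closure_eq]
  exact hxK

-- injectivity of radial projection on the frontier of a convex set

lemma radial_inj {K : Set E2} (hKconv : Convex ℝ K) (hKcl : IsClosed K) {c : E2}
    (hc : c ∈ interior K) {x y : E2} (hx : x ∈ frontier K) (hy : y ∈ frontier K)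
    (hnorm : ‖x - c‖ ≤ ‖y - c‖)
    (hr : ‖x - c‖⁻¹ • (x - c) = ‖y - c‖⁻¹ • (y - c)) : x = y := by
  have hxc : x ≠ c := by
    rintro rfl
    exact (disjoint_interior_frontier (s := K)).symm.ne_of_mem hx hc rfl
  have hyc : y ≠ c := by
    rintro rfl
    exact (disjoint_interior_frontier (s := K)).symm.ne_of_mem hy hc rfl
  have hxpos : 0 < ‖x - c‖ := by simpa [sub_eq_zero] using hxc
  have hypos : 0 < ‖y - c‖ := by simpa [sub_eq_zero] using hyc
  set t := ‖x - c‖ / ‖y - c‖ with htdef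
  have ht0 : 0 < t := div_pos hxpos hypos
  have ht1 : t ≤ 1 := (div_le_one hypos).2 hnorm
  have hxy : x - c = t • (y - c) := by
    have := congrArg (fun w => ‖x - c‖ • w) hr
    simp only [smul_smul] at this
    rw [mul_inv_cancel₀ (ne_of_gt hxpos), one_smul] at this
    rw [this, htdef, div_eq_mul_inv, mul_comm, mul_smul]
  rcases lt_or_eq_of_le ht1 with ht | ht
  · exfalso
    have hmem : (1 - t) • c + t • y ∈ interior K :=
      hKconv.combo_interior_closure_mem_interior hc
        (subset_closure (hKcl.frontier_subset hy)) (by linarith) (le_of_lt ht0) (by ring)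
    have hxeq : x = (1 - t) • c + t • y := by
      have : x = c + t • (y - c) := by
        rw [← hxy]; module
      rw [this]; module
    rw [← hxeq] at hmem
    exact (disjoint_interior_frontier (s := K)).symm.ne_of_mem hx hmem rfl
  · rw [ht, one_smul] at hxy
    exact sub_left_injective hxy

theorem illuminated_region_connected
    (Ω : Set (EuclideanSpace ℝ (Fin 2)))
    (hopen : IsOpen Ω) (hbdd : Bornology.IsBounded Ω) (hne : Ω.Nonempty)
    (hconv : StrictConvex ℝ (closure Ω))
    (n : EuclideanSpace ℝ (Fin 2) → EuclideanSpace ℝ (Fin 2))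
    (hn_cont : ContinuousOn n (frontier Ω))
    (hn_unit : ∀ x ∈ frontier Ω, ‖n x‖ = 1)
    (hn_support : ∀ x ∈ frontier Ω, ∀ y ∈ closure Ω, ⟪y - x, n x⟫ ≤ 0)
    (hn_strict : ∀ x ∈ frontier Ω, ∀ y ∈ Ω, ⟪y - x, n x⟫ < 0)
    (x₀ : EuclideanSpace ℝ (Fin 2)) (hx₀ : x₀ ∉ closure Ω) :
    IsConnected {x ∈ frontier Ω | 0 < ⟪x - x₀, n x⟫} := by
  classical
  set K : Set E2 := closure Ω with hKdef
  have hKcl : IsClosed K := isClosed_closure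
  have hKconv : Convex ℝ K := hconv.convex
  have hKbdd : Bornology.IsBounded K := hbdd.closure
  have hKcomp : IsCompact K := Metric.isCompact_of_isClosed_isBounded hKcl hKbdd
  have hΩK : Ω ⊆ K := subset_closure
  have hint : interior K = Ω := by
    apply Subset.antisymm
    · intro x hx
      by_contra hxΩ
      have hxF : x ∈ frontier Ω := ⟨interior_subset hx, by rwa [hopen.interior_eq]⟩
      obtain ⟨ε, hε, hball⟩ := Metric.mem_nhds_iff.1 (mem_interior_iff_mem_nhds.1 hx)
      have hy : x + (ε / 2) • n x ∈ K := hball (by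
        rw [mem_ball, dist_eq_norm]
        have h1 : x + (ε / 2) • n x - x = (ε / 2) • n x := by module
        rw [h1, norm_smul, hn_unit x hxF, mul_one, Real.norm_eq_abs,
          abs_of_pos (by linarith)]
        linarith)
      have h2 := hn_support x hxF _ hy
      have h3 : x + (ε / 2) • n x - x = (ε / 2) • n x := by module
      rw [h3, real_inner_smul_left, real_inner_self_eq_norm_sq, hn_unit x hxF] at h2
      nlinarith
    · exact interior_maximal subset_closure hopen
  have hFK : frontier Ω = frontier K := by
    rw [frontier, frontier, hopen.interior_eq, hKcl.closure_eq, hint]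
  rw [hFK] at hn_cont hn_unit hn_support hn_strict ⊢
  set F : Set E2 := frontier K with hFdef
  have hFsubK : F ⊆ K := hKcl.frontier_subset
  have hFcl : IsClosed F := isClosed_frontier
  have hFcomp : IsCompact F := hKcomp.of_isClosed_subset hFcl hFsubK
  have hninj : ∀ x ∈ F, ∀ y ∈ F, n x = n y → x = y := by
    intro x hx y hy hnxy
    by_contra hxy
    have h1 := hn_support x hx y (hFsubK hy)
    have h2 := hn_support y hy x (hFsubK hx)
    rw [← hnxy] at h2
    have hzero : ⟪y - x, n x⟫ = 0 := by
      have h4 : ⟪y - x, n x⟫ = -⟪x - y, n x⟫ := by rw [← inner_neg_left, neg_sub]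
      linarith [h4 ▸ h1]
    have hmid : (1/2 : ℝ) • x + (1/2 : ℝ) • y ∈ interior K :=
      hconv (hFsubK hx) (hFsubK hy) hxy one_half_pos one_half_pos (by norm_num)
    have hmΩ : (1/2 : ℝ) • x + (1/2 : ℝ) • y ∈ Ω := by rwa [hint] at hmid
    have hstrict := hn_strict x hx _ hmΩ
    have h5 : (1/2 : ℝ) • x + (1/2 : ℝ) • y - x = (1/2 : ℝ) • (y - x) := by module
    rw [h5, real_inner_smul_left, hzero] at hstrict
    linarith
  -- separating direction
  obtain ⟨f, u, hfu, hux⟩ := geometric_hahn_banach_closed_point hKconv hKcl hx₀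
  obtain ⟨y₀, hy₀⟩ := hne
  have hy₀K : y₀ ∈ K := hΩK hy₀
  set w : E2 := -((InnerProductSpace.toDual ℝ E2).symm f : E2) with hwdef
  have hwpos : ∀ y ∈ K, 0 < ⟪y - x₀, w⟫ := by
    intro y hy
    have h1 : f y < u := hfu y hy
    have h2 : ⟪((InnerProductSpace.toDual ℝ E2).symm f : E2), y - x₀⟫ = f (y - x₀) :=
      InnerProductSpace.toDual_symm_apply
    rw [map_sub] at h2
    rw [hwdef, inner_neg_right, real_inner_comm, h2]
    linarith
  have hwne : w ≠ 0 := by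
    intro h
    have := hwpos y₀ hy₀K
    rw [h, inner_zero_right] at this
    linarith
  set e : E2 := ‖w‖⁻¹ • w with hedef
  have he : ‖e‖ = 1 := norm_smul_inv_norm hwne
  have hsep : ∀ y ∈ K, 0 < ⟪y - x₀, e⟫ := by
    intro y hy
    rw [hedef, real_inner_smul_right]
    exact mul_pos (inv_pos.2 (norm_pos_iff.2 hwne)) (hwpos y hy)
  have hKne : K.Nonempty := ⟨y₀, hy₀K⟩
  have hAs := arc_connected K hKne x₀ e he hsep
  set As : Set E2 := Sph ∩ {u | ∃ y ∈ K, 0 < ⟪y - x₀, u⟫} with hAsdef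
  -- radial homeomorphism
  have hcint : y₀ ∈ interior K := by rw [hint]; exact hy₀
  have hFnec : ∀ x ∈ F, x - y₀ ≠ 0 := by
    intro x hx h
    rw [sub_eq_zero] at h
    rw [h] at hx
    exact disjoint_interior_frontier.ne_of_mem hcint hx rfl
  haveI : CompactSpace ↥F := isCompact_iff_compactSpace.1 hFcomp
  set rmap : ↥F → ↥Sph := fun x => ⟨‖(x : E2) - y₀‖⁻¹ • ((x : E2) - y₀),
    mem_sphere_zero_iff_norm.2 (norm_smul_inv_norm (hFnec x x.2))⟩ with hrmapdef
  have hrcont : Continuous rmap := by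
    apply Continuous.subtype_mk
    apply Continuous.fun_smul
    · apply Continuous.inv₀
      · exact continuous_norm.comp (continuous_subtype_val.sub continuous_const)
      · intro x
        exact norm_ne_zero_iff.2 (hFnec x x.2)
    · exact continuous_subtype_val.sub continuous_const
  have hrinj : Function.Injective rmap := by
    intro x y hxy
    have h := congrArg Subtype.val hxy
    simp only [hrmapdef] at h
    rcases le_total ‖(x : E2) - y₀‖ ‖(y : E2) - y₀‖ with hle | hle
    · exact Subtype.ext (radial_inj hKconv hKcl hcint x.2 y.2 hle h)
    · exact Subtype.ext ((radial_inj hKconv hKcl hcint y.2 x.2 hle h.symm).symm)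
  have hrsurj : Function.Surjective rmap := by
    intro u
    obtain ⟨T, hT, hTF⟩ := ray_hits_frontier hKcomp hcint (sph_norm u)
    refine ⟨⟨y₀ + T • (u : E2), hTF⟩, Subtype.ext ?_⟩
    simp only [hrmapdef]
    have h1 : y₀ + T • (u : E2) - y₀ = T • (u : E2) := by module
    rw [h1, norm_smul, sph_norm u, mul_one, Real.norm_eq_abs, abs_of_pos hT, smul_smul,
      inv_mul_cancel₀ (ne_of_gt hT), one_smul]
  let rhomeo : ↥F ≃ₜ ↥Sph :=
    Continuous.homeoOfEquivCompactToT2 (f := Equiv.ofBijective rmap ⟨hrinj, hrsurj⟩) hrcont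
  -- the Gauss map as a homeomorphism
  set nmap : ↥F → ↥Sph := fun x => ⟨n x, mem_sphere_zero_iff_norm.2 (hn_unit x x.2)⟩
    with hnmapdef
  have hncont : Continuous nmap :=
    Continuous.subtype_mk (continuousOn_iff_continuous_restrict.1 hn_cont) _
  have hninj' : Function.Injective nmap := by
    intro x y hxy
    exact Subtype.ext (hninj x x.2 y y.2 (congrArg Subtype.val hxy))
  have hnsurj : Function.Surjective nmap := by
    have hcirc := circle_map_surjective (nmap ∘ rhomeo.symm)
      (hncont.comp rhomeo.symm.continuous) (hninj'.comp rhomeo.symm.injective)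
    intro u
    obtain ⟨z, hz⟩ := hcirc u
    exact ⟨rhomeo.symm z, hz⟩
  let nhomeo : ↥F ≃ₜ ↥Sph :=
    Continuous.homeoOfEquivCompactToT2 (f := Equiv.ofBijective nmap ⟨hninj', hnsurj⟩) hncont
  have hnapp : ∀ x : ↥F, (nhomeo x : E2) = n x := fun x => rfl
  -- transfer connectedness
  set Sub : Set ↥Sph := Subtype.val ⁻¹' As with hSubdef
  have hSubconn : IsConnected Sub := by
    refine ⟨?_, ?_⟩
    · obtain ⟨v, hv⟩ := hAs.nonempty
      exact ⟨⟨v, hv.1⟩, hv⟩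
    · apply (Topology.IsInducing.subtypeVal).isPreconnected_image.mp
      have himg : Subtype.val '' Sub = As := by
        apply Subset.antisymm
        · rintro v ⟨x, hx, rfl⟩
          exact hx
        · intro v hv
          exact ⟨⟨v, hv.1⟩, hv, rfl⟩
      rw [himg]
      exact hAs.isPreconnected
  have hT : IsConnected (⇑nhomeo.symm '' Sub) :=
    hSubconn.image _ nhomeo.symm.continuous.continuousOn
  have hTval : IsConnected (Subtype.val '' (⇑nhomeo.symm '' Sub)) :=
    hT.image _ continuous_subtype_val.continuousOn
  have hΓ : {x ∈ F | 0 < ⟪x - x₀, n x⟫} = Subtype.val '' (⇑nhomeo.symm '' Sub) := by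
    ext x
    constructor
    · rintro ⟨hxF, hxpos⟩
      refine ⟨nhomeo.symm (nhomeo ⟨x, hxF⟩), ⟨nhomeo ⟨x, hxF⟩, ?_, rfl⟩, ?_⟩
      · show (nhomeo ⟨x, hxF⟩ : E2) ∈ As
        rw [hnapp]
        exact ⟨mem_sphere_zero_iff_norm.2 (hn_unit x hxF), ⟨x, hFsubK hxF, hxpos⟩⟩
      · rw [Homeomorph.symm_apply_apply]
    · rintro ⟨z, ⟨zz, hzz, rfl⟩, rfl⟩
      refine ⟨(nhomeo.symm zz).2, ?_⟩
      have h1 : (nhomeo (nhomeo.symm zz) : E2) ∈ As := by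
        rw [Homeomorph.apply_symm_apply]
        exact hzz
      rw [hnapp] at h1
      obtain ⟨-, y, hyK, hypos⟩ := h1
      have h2 := hn_support ((nhomeo.symm zz : ↥F) : E2) (nhomeo.symm zz).2 y hyK
      have h3 : ⟪((nhomeo.symm zz : ↥F) : E2) - x₀, n ((nhomeo.symm zz : ↥F) : E2)⟫
          = ⟪((nhomeo.symm zz : ↥F) : E2) - y, n ((nhomeo.symm zz : ↥F) : E2)⟫
            + ⟪y - x₀, n ((nhomeo.symm zz : ↥F) : E2)⟫ := by
        rw [← inner_add_left]
        congr 1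
        module
      have h4 : ⟪((nhomeo.symm zz : ↥F) : E2) - y, n ((nhomeo.symm zz : ↥F) : E2)⟫
          = -⟪y - ((nhomeo.symm zz : ↥F) : E2), n ((nhomeo.symm zz : ↥F) : E2)⟫ := by
        rw [← inner_neg_left, neg_sub]
      rw [h3, h4]
      linarith
  rw [hΓ]
  exact hTval

end IlluminatedRegion
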